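/- The number of derangements d_n of {1,...,n} satisfies, for n ≥ 1, the recurrence d_n = Σ_{q=2}^{n} ((n-1)!/(n-q)!) · d_{n-q}, with initial conditions d_0 = 1 and d_1 = 0. -/

import Mathlib

lemma aux : ∀ n : ℕ, numDerangements (n + 1) =
    ∑ i ∈ Finset.range n, n.descFactorial (i + 1) * numDerangements (n - 1 - i) := by
  intro n
  induction n with
  | zero => simp [numDerangements]
  | succ n ih =>
    have key : ∀ i ∈ Finset.range (n + 1),
        (n + 1).descFactorial (i + 1) * numDerangements (n + 1 - 1 - i)
        = (n + 1) * (n.descFactorial i * numDerangements (n - i)) := by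
      intro i _
      rw [Nat.succ_descFactorial_succ]
      have h : n + 1 - 1 - i = n - i := by omega
      rw [h]; ring
    rw [Finset.sum_congr rfl key, ← Finset.mul_sum, Finset.sum_range_succ']
    simp only [Nat.descFactorial_zero, one_mul, Nat.sub_zero]
    have : ∀ i, n.descFactorial (i + 1) * numDerangements (n - (i + 1))
        = n.descFactorial (i + 1) * numDerangements (n - 1 - i) := by
      intro i
      have h : n - (i + 1) = n - 1 - i := by omega
      rw [h]
    simp only [this]
    rw [← ih, numDerangements_add_two]
    ring

/-- The number of derangements satisfies `d_0 = 1`, `d_1 = 0`, and for `n ≥ 1`,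
`d_n = Σ_{q=2}^{n} ((n-1)!/(n-q)!) * d_{n-q}`. -/
theorem stmt3 :
    numDerangements 0 = 1 ∧ numDerangements 1 = 0 ∧
    ∀ n : ℕ, 1 ≤ n →
      numDerangements n =
        ∑ q ∈ Finset.Icc 2 n, (n - 1).descFactorial (q - 1) * numDerangements (n - q) := by
  refine ⟨rfl, rfl, ?_⟩
  intro n hn
  obtain ⟨m, rfl⟩ := Nat.exists_eq_add_of_le hn
  rw [add_comm 1 m]
  rw [← Finset.Ico_add_one_right_eq_Icc, Finset.sum_Ico_eq_sum_range]
  have h2 : m + 1 + 1 - 2 = m := by omega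
  rw [h2, aux m]
  apply Finset.sum_congr rfl
  intro i _
  have e1 : m + 1 - 1 = m := by omega
  have e2 : 2 + i - 1 = i + 1 := by omega
  have e3 : m + 1 - (2 + i) = m - 1 - i := by omega
  rw [e1, e2, e3]
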